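/- Let β > 1 be fixed. Then for all real x ≥ 5, the sum over primes p > x of 1/p^β is strictly less than (2β/(β-1)) · 1/(x^(β-1) · log x). -/

import Mathlib

open Finset



lemma cheb_aux (s : Finset ℕ) (m : ℕ) (hp : ∀ p ∈ s, p.Prime) (hm : ∀ p ∈ s, p ≤ m) :
    ∑ p ∈ s, Real.log p ≤ m * Real.log 4 := by
  have hsub : s ⊆ (Finset.range (m+1)).filter Nat.Prime := by
    intro p hps
    simp only [Finset.mem_filter, Finset.mem_range, Nat.lt_succ_iff]
    exact ⟨hm p hps, hp p hps⟩
  have h1 : (∏ p ∈ s, p : ℕ) ≤ primorial m := by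
    have : (∏ p ∈ (Finset.range (m+1)).filter Nat.Prime, p : ℕ) = primorial m := rfl
    rw [← this]
    exact Finset.prod_le_prod_of_subset_of_one_le' hsub (fun i hi _ =>
      (Finset.mem_filter.mp hi).2.one_lt.le.trans' (by norm_num))
  have h2 : (∏ p ∈ s, p : ℕ) ≤ 4 ^ m := h1.trans (primorial_le_4_pow m)
  have hpos : ∀ p ∈ s, (0:ℝ) < p := fun p hps => by exact_mod_cast (hp p hps).pos
  have hlog : ∑ p ∈ s, Real.log p = Real.log (∏ p ∈ s, (p:ℝ)) :=
    (Real.log_prod (s := s) (fun p hps => (hpos p hps).ne')).symm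
  rw [hlog]
  have hcast : (∏ p ∈ s, (p:ℝ)) = ((∏ p ∈ s, p : ℕ) : ℝ) := by push_cast; ring
  rw [hcast]
  calc Real.log ((∏ p ∈ s, p : ℕ) : ℝ) ≤ Real.log ((4:ℝ) ^ m) := by
        apply Real.log_le_log (by exact_mod_cast Finset.prod_pos (fun p hps => (hp p hps).pos))
        exact_mod_cast h2
    _ = m * Real.log 4 := by rw [Real.log_pow]

lemma convex_step {β : ℝ} (hβ : 1 < β) {a : ℝ} (ha : 1 ≤ a) :
    (a+1) ^ (-β) ≤ (a ^ (1-β) - (a+1) ^ (1-β)) / (β - 1) := by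
  have ha0 : 0 < a := lt_of_lt_of_le one_pos ha
  obtain ⟨c, hc, hceq⟩ := exists_hasDerivAt_eq_slope (fun t => t ^ (1-β))
      (fun t => (1-β) * t ^ (-β)) (by linarith : a < a + 1)
      (by
        apply ContinuousOn.rpow_const continuousOn_id
        intro t ht
        exact Or.inl (by simp only [id]; rintro rfl; exact absurd ht.1 (by norm_num; linarith)))
      (by
        intro t ht
        have ht0 : t ≠ 0 := by have h1 := ht.1; intro h; rw [h] at h1; linarith
        have := Real.hasDerivAt_rpow_const (x := t) (p := 1-β) (Or.inl ht0)
        convert this using 1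
        ring_nf)
  have hc0 : 0 < c := lt_trans ha0 hc.1
  have hcb : c ≤ a + 1 := hc.2.le
  have hmono : (a+1) ^ (-β) ≤ c ^ (-β) :=
    Real.rpow_le_rpow_of_nonpos hc0 hcb (by linarith)
  rw [le_div_iff₀ (by linarith : (0:ℝ) < β - 1)]
  have : (a+1) ^ (1-β) - a ^ (1-β) = (1-β) * c ^ (-β) := by
    have := hceq
    field_simp at this
    linarith [this]
  nlinarith [this, hmono]


noncomputable def hfun (β : ℝ) (m : ℕ) : ℝ := (m:ℝ)^(-β)
noncomputable def gfun (β : ℝ) (m : ℕ) : ℝ := (m:ℝ)^(1-β)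

lemma tel_sum (f : ℕ → ℝ) {a b : ℕ} (hab : a ≤ b) :
    ∑ m ∈ Finset.Ico a b, (f m - f (m+1)) = f a - f b := by
  rw [Finset.sum_Ico_eq_sub _ hab, Finset.sum_range_sub' f, Finset.sum_range_sub' f]
  ring

lemma hfun_nonneg (β : ℝ) (m : ℕ) : 0 ≤ hfun β m := Real.rpow_nonneg (Nat.cast_nonneg m) _

lemma gfun_nonneg (β : ℝ) (m : ℕ) : 0 ≤ gfun β m := Real.rpow_nonneg (Nat.cast_nonneg m) _

lemma hfun_anti {β : ℝ} (hβ : 1 < β) {m : ℕ} (hm : 1 ≤ m) : hfun β (m+1) ≤ hfun β m := by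
  have hm0 : (0:ℝ) < m := by exact_mod_cast hm
  apply Real.rpow_le_rpow_of_nonpos hm0 (by push_cast; linarith) (by linarith)

lemma mul_hfun {β : ℝ} {m : ℕ} (hm : 1 ≤ m) : (m:ℝ) * hfun β m = gfun β m := by
  have hm0 : (0:ℝ) < m := by exact_mod_cast hm
  rw [hfun, gfun, show (1-β) = 1 + -β by ring, Real.rpow_add hm0, Real.rpow_one]

lemma abel_bound (β : ℝ) (hβ : 1 < β) (s : Finset ℕ) (N : ℕ) (hN : 1 ≤ N)
    (hsP : ∀ p ∈ s, p.Prime) (hsN : ∀ p ∈ s, N ≤ p) :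
    ∑ p ∈ s, Real.log p * (p:ℝ) ^ (-β) ≤ Real.log 4 * (β/(β-1)) * (N:ℝ)^(1-β) := by
  classical
  have hβ1 : (0:ℝ) < β - 1 := by linarith
  have hlog4 : (0:ℝ) < Real.log 4 := Real.log_pos (by norm_num)
  set M : ℕ := max N (s.sup id + 1) with hMdef
  have hNM : N ≤ M := le_max_left _ _
  have hsM : ∀ p ∈ s, p < M := fun p hp =>
    lt_of_lt_of_le (Nat.lt_succ_of_le (Finset.le_sup (f := id) hp)) (le_max_right _ _)
  -- expand each term
  have expand : ∀ p ∈ s, Real.log p * (p:ℝ)^(-β)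
      = (∑ m ∈ Finset.range M, if p ≤ m then Real.log p * (hfun β m - hfun β (m+1)) else 0)
        + Real.log p * hfun β M := by
    intro p hp
    have h1 : (∑ m ∈ Finset.range M, if p ≤ m then Real.log p * (hfun β m - hfun β (m+1)) else 0)
        = ∑ m ∈ Finset.Ico p M, Real.log p * (hfun β m - hfun β (m+1)) := by
      rw [← Finset.sum_filter]
      congr 1
      ext m
      simp only [Finset.mem_filter, Finset.mem_range, Finset.mem_Ico]
      tauto
    rw [h1, ← Finset.mul_sum, tel_sum _ (hsM p hp).le]
    show Real.log p * hfun β p = _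
    ring
  rw [Finset.sum_congr rfl expand, Finset.sum_add_distrib, Finset.sum_comm]
  -- bound the last term
  have last_bound : ∑ p ∈ s, Real.log p * hfun β M ≤ Real.log 4 * gfun β M := by
    rw [← Finset.sum_mul]
    calc (∑ p ∈ s, Real.log p) * hfun β M ≤ ((M:ℝ) * Real.log 4) * hfun β M := by
          apply mul_le_mul_of_nonneg_right _ (hfun_nonneg β M)
          exact cheb_aux s M hsP (fun p hp => (hsM p hp).le)
      _ = Real.log 4 * gfun β M := by rw [mul_comm (M:ℝ), mul_assoc, mul_hfun (le_trans hN hNM)]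
  -- bound the main double sum
  have main_bound : ∑ m ∈ Finset.range M, ∑ p ∈ s,
        (if p ≤ m then Real.log p * (hfun β m - hfun β (m+1)) else 0)
      ≤ Real.log 4 * ((gfun β N - gfun β M) + (gfun β N - gfun β M)/(β-1)) := by
    have step1 : ∀ m ∈ Finset.range M, (∑ p ∈ s,
          if p ≤ m then Real.log p * (hfun β m - hfun β (m+1)) else 0)
        ≤ (if N ≤ m then ((m:ℝ) * Real.log 4) * (hfun β m - hfun β (m+1)) else 0) := by
      intro m _
      by_cases hm : N ≤ m
      · rw [if_pos hm, ← Finset.sum_filter, ← Finset.sum_mul]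
        apply mul_le_mul_of_nonneg_right
        · exact cheb_aux _ m (fun p hp => hsP p (Finset.mem_filter.mp hp).1)
            (fun p hp => (Finset.mem_filter.mp hp).2)
        · have := hfun_anti hβ (le_trans hN hm)
          linarith
      · rw [if_neg hm]
        apply le_of_eq
        apply Finset.sum_eq_zero
        intro p hp
        rw [if_neg]
        intro hpm
        exact hm (le_trans (hsN p hp) hpm)
    calc ∑ m ∈ Finset.range M, ∑ p ∈ s,
          (if p ≤ m then Real.log p * (hfun β m - hfun β (m+1)) else 0)
        ≤ ∑ m ∈ Finset.range M,
            (if N ≤ m then ((m:ℝ) * Real.log 4) * (hfun β m - hfun β (m+1)) else 0) :=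
          Finset.sum_le_sum step1
      _ = ∑ m ∈ Finset.Ico N M, ((m:ℝ) * Real.log 4) * (hfun β m - hfun β (m+1)) := by
          rw [← Finset.sum_filter]
          congr 1
          ext m
          simp only [Finset.mem_filter, Finset.mem_range, Finset.mem_Ico]
          tauto
      _ = ∑ m ∈ Finset.Ico N M,
            Real.log 4 * ((gfun β m - gfun β (m+1)) + hfun β (m+1)) := by
          apply Finset.sum_congr rfl
          intro m hm
          have hm1 : 1 ≤ m := le_trans hN (Finset.mem_Ico.mp hm).1
          have e1 : (m:ℝ) * hfun β m = gfun β m := mul_hfun hm1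
          have e2 : ((m+1:ℕ):ℝ) * hfun β (m+1) = gfun β (m+1) := mul_hfun (by omega)
          have e2' : (m:ℝ) * hfun β (m+1) = gfun β (m+1) - hfun β (m+1) := by
            push_cast at e2
            linarith
          linear_combination Real.log 4 * e1 - Real.log 4 * e2'
      _ ≤ Real.log 4 * ((gfun β N - gfun β M) + (gfun β N - gfun β M)/(β-1)) := by
          rw [← Finset.mul_sum]
          apply mul_le_mul_of_nonneg_left _ hlog4.le
          rw [Finset.sum_add_distrib, tel_sum (gfun β) hNM]
          have : ∑ m ∈ Finset.Ico N M, hfun β (m+1)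
              ≤ ∑ m ∈ Finset.Ico N M, (gfun β m - gfun β (m+1))/(β-1) := by
            apply Finset.sum_le_sum
            intro m hm
            have hm1 : (1:ℝ) ≤ (m:ℝ) := by
              exact_mod_cast le_trans hN (Finset.mem_Ico.mp hm).1
            have := convex_step hβ hm1
            simp only [hfun, gfun]
            push_cast
            convert this using 2
          rw [← Finset.sum_div, tel_sum (gfun β) hNM] at this
          linarith
  have hgM : 0 ≤ gfun β M := gfun_nonneg β M
  have final : Real.log 4 * ((gfun β N - gfun β M) + (gfun β N - gfun β M)/(β-1))
      + Real.log 4 * gfun β M ≤ Real.log 4 * (β/(β-1)) * (N:ℝ)^(1-β) := by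
    have hgNN : gfun β N = (N:ℝ)^(1-β) := rfl
    rw [← hgNN]
    have key : ((gfun β N - gfun β M) + (gfun β N - gfun β M)/(β-1)) + gfun β M
        ≤ (β/(β-1)) * gfun β N := by
      have hq : 0 ≤ gfun β M / (β-1) := div_nonneg hgM hβ1.le
      have hr : (β/(β-1)) * gfun β N = gfun β N + gfun β N/(β-1) := by
        field_simp
        ring
      have hs' : (gfun β N - gfun β M)/(β-1) = gfun β N/(β-1) - gfun β M/(β-1) := by ring
      linarith
    nlinarith [key, hlog4]
  linarith [main_bound, last_bound, final]

open Classical in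
theorem stmt_5 (β : ℝ) (hβ : 1 < β) :
    ∀ x : ℝ, 5 ≤ x →
      (∑' p : ℕ, if p.Prime ∧ x < (p : ℝ) then 1 / (p : ℝ) ^ β else 0)
        < (2 * β / (β - 1)) * (1 / (x ^ (β - 1) * Real.log x)) := by
  intro x hx
  have hx0 : (0:ℝ) < x := by linarith
  have hβ1 : (0:ℝ) < β - 1 := by linarith
  have hβ0 : (0:ℝ) < β / (β - 1) := div_pos (by linarith) hβ1
  have hlogx : (0:ℝ) < Real.log x := Real.log_pos (by linarith)
  have hlog4 : (0:ℝ) < Real.log 4 := Real.log_pos (by norm_num)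
  set N : ℕ := ⌊x⌋₊ + 1 with hNdef
  have hxN : x < (N:ℝ) := by
    have := Nat.lt_floor_add_one x
    rw [hNdef]; push_cast
    exact this
  have hN1 : 1 ≤ N := Nat.succ_le_succ (Nat.zero_le _)
  have hN0 : (0:ℝ) < (N:ℝ) := lt_trans hx0 hxN
  have hgN : (0:ℝ) < (N:ℝ) ^ (1-β) := Real.rpow_pos_of_pos hN0 _
  set C : ℝ := Real.log 4 * (β / (β - 1)) * (N:ℝ) ^ (1-β) / Real.log x with hC
  have hCnonneg : 0 ≤ C := by
    apply div_nonneg _ hlogx.le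
    exact mul_nonneg (mul_nonneg hlog4.le hβ0.le) hgN.le
  have bound : ∀ s : Finset ℕ, (∀ p ∈ s, p.Prime) → (∀ p ∈ s, x < (p:ℝ)) →
      ∑ p ∈ s, 1 / (p:ℝ) ^ β ≤ C := by
    intro s hsP hsx
    have hsN : ∀ p ∈ s, N ≤ p := by
      intro p hp
      exact Nat.succ_le_of_lt ((Nat.floor_lt hx0.le).mpr (hsx p hp))
    calc ∑ p ∈ s, 1 / (p:ℝ) ^ β
        ≤ ∑ p ∈ s, (Real.log p * (p:ℝ) ^ (-β)) / Real.log x := by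
          apply Finset.sum_le_sum
          intro p hp
          have hp0 : (0:ℝ) < (p:ℝ) := lt_trans hx0 (hsx p hp)
          have h1 : 1 / (p:ℝ) ^ β = (p:ℝ) ^ (-β) := by
            rw [Real.rpow_neg hp0.le, one_div]
          rw [h1, le_div_iff₀ hlogx]
          have hlp : Real.log x ≤ Real.log p := Real.log_le_log hx0 (hsx p hp).le
          have hnn : (0:ℝ) ≤ (p:ℝ) ^ (-β) := Real.rpow_nonneg hp0.le _
          nlinarith [hlp, hnn, hlogx]
      _ = (∑ p ∈ s, Real.log p * (p:ℝ) ^ (-β)) / Real.log x := by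
          rw [Finset.sum_div]
      _ ≤ (Real.log 4 * (β / (β - 1)) * (N:ℝ) ^ (1-β)) / Real.log x := by
          apply (div_le_div_iff_of_pos_right hlogx).mpr
          exact abel_bound β hβ s N hN1 hsP hsN
      _ = C := rfl
  have key : ∀ u : Finset ℕ,
      ∑ p ∈ u, (if p.Prime ∧ x < (p : ℝ) then 1 / (p : ℝ) ^ β else 0) ≤ C := by
    intro u
    rw [← Finset.sum_filter]
    exact bound _ (fun p hp => ((Finset.mem_filter.mp hp).2).1)
      (fun p hp => ((Finset.mem_filter.mp hp).2).2)
  have htsum := tsum_le_of_sum_le' (L := SummationFilter.unconditional ℕ) hCnonneg key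
  refine lt_of_le_of_lt htsum ?_
  have hNx : (N:ℝ) ^ (1-β) ≤ x ^ (1-β) :=
    Real.rpow_le_rpow_of_nonpos hx0 hxN.le (by linarith)
  have hxR : (0:ℝ) < x ^ (1-β) := Real.rpow_pos_of_pos hx0 _
  have hxpow : x ^ (1-β) = (x ^ (β-1))⁻¹ := by
    rw [show (1-β) = -(β-1) by ring, Real.rpow_neg hx0.le]
  have hA : (0:ℝ) < x ^ (β-1) := Real.rpow_pos_of_pos hx0 _
  have hlog4lt2 : Real.log 4 < 2 := by
    have h4 : (4:ℝ) = 2 ^ (2:ℕ) := by norm_num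
    rw [h4, Real.log_pow]
    push_cast
    nlinarith [Real.log_two_lt_d9]
  calc C ≤ Real.log 4 * (β / (β - 1)) * x ^ (1-β) / Real.log x := by
        apply (div_le_div_iff_of_pos_right hlogx).mpr
        exact mul_le_mul_of_nonneg_left hNx (mul_nonneg hlog4.le hβ0.le)
    _ < 2 * (β / (β - 1)) * x ^ (1-β) / Real.log x := by
        apply (div_lt_div_iff_of_pos_right hlogx).mpr
        exact mul_lt_mul_of_pos_right (mul_lt_mul_of_pos_right hlog4lt2 hβ0) hxR
    _ = (2 * β / (β - 1)) * (1 / (x ^ (β-1) * Real.log x)) := by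
        rw [hxpow]
        field_simp
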